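/- (Trial-energy integral identity, eq. (4.5)) Let ω > 0, α ∈ (0,π), γ ∈ [0,π/2], a ∈ ℝ, Λ ∈ ℝ. Let s̃(θ) = a for θ ∈ (−π+α, 0) and s̃(θ) = 1 for θ ∈ (0, α). Let g : (−π+α, α) → ℝ be continuous and piecewise C¹ with g and g′ square-integrable, and set u₀(ρ,θ) = e^{−ωρ²/2} e^{−iρ g(θ)}. Then ∫_{−π+α}^{α} ∫_0^{∞} [ |∂_ρ u₀|² + ρ^{−2} |(∂_θ + i s̃(θ)(ρ²/2)cos γ) u₀|² + s̃(θ)² ρ² sin²γ sin²θ |u₀|² − Λ|u₀|² ] ρ dρ dθ = (1/(2ω)) ∫_{−π+α}^{α} (g(θ)² + g′(θ)² − Λ) dθ − (√π cos γ/(4 ω^{3/2})) ∫_{−π+α}^{α} s̃(θ) g′(θ) dθ + (1/(2ω²)) ∫_{−π+α}^{α} ( ω² + s̃(θ)² sin²γ sin²θ + (1/4) s̃(θ)² cos²γ ) dθ. -/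

import Mathlib

open MeasureTheory Real Set Filter

noncomputable section

namespace MagStep

/-- The Gaussian trial function `u₀(ρ,θ) = e^{-ωρ²/2} e^{-iρ g(θ)}`. -/
def u0 (ω : ℝ) (g : ℝ → ℝ) (ρ θ : ℝ) : ℂ :=
  Complex.exp (-(ω * ρ ^ 2 / 2 : ℂ)) * Complex.exp (-(Complex.I * ρ * g θ))

/-- The angular step function `s̃`: `a` for `θ < 0` and `1` for `θ > 0`. -/
def stg (a θ : ℝ) : ℝ := if θ < 0 then a else 1

lemma norm_u0_sq (ω : ℝ) (g : ℝ → ℝ) (ρ θ : ℝ) : ‖u0 ω g ρ θ‖^2 = exp (-(ω*ρ^2)) := by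
  simp only [u0, norm_mul, Complex.norm_exp]
  rw [← Real.exp_add]
  norm_num [Complex.div_re, Complex.normSq, Complex.mul_re, Complex.mul_im]
  rw [← Complex.ofReal_pow, Complex.ofReal_re, sq, ← Real.exp_add]
  ring_nf

lemma norm1 (x y : ℝ) : ‖(-(x:ℂ) - Complex.I * (y:ℂ))‖^2 = x^2 + y^2 := by
  rw [← Complex.normSq_eq_norm_sq]
  simp [Complex.normSq_apply]
  ring

lemma norm2 (r : ℝ) : ‖Complex.I * (r:ℂ)‖^2 = r^2 := by
  simp [norm_mul, mul_pow, sq_abs]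

lemma moment (ω : ℝ) (hω : 0 < ω) (n : ℕ) :
    ∫ x in Ioi (0:ℝ), x ^ n * exp (-ω * x ^ 2)
      = ω ^ (-((n:ℝ)+1)/2) * (1/2) * Real.Gamma (((n:ℝ)+1)/2) := by
  rw [← integral_rpow_mul_exp_neg_mul_rpow two_pos
      (by have : (0:ℝ) ≤ n := Nat.cast_nonneg n; linarith) hω]
  refine setIntegral_congr_fun measurableSet_Ioi (fun x hx => ?_)
  rw [rpow_two, rpow_natCast]

lemma moment1 (ω : ℝ) (hω : 0 < ω) :
    ∫ x in Ioi (0:ℝ), x ^ 1 * exp (-ω * x ^ 2) = 1/(2*ω) := by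
  rw [moment ω hω 1]
  norm_num [Real.Gamma_one]
  rw [rpow_neg_one]

lemma moment2 (ω : ℝ) (hω : 0 < ω) :
    ∫ x in Ioi (0:ℝ), x ^ 2 * exp (-ω * x ^ 2) = Real.sqrt π / (4 * ω ^ ((3:ℝ)/2)) := by
  rw [moment ω hω 2]
  have h32 : Real.Gamma (3/2) = Real.sqrt π / 2 := by
    rw [show (3/2 : ℝ) = 1/2 + 1 by norm_num, Real.Gamma_add_one (by norm_num),
      Real.Gamma_one_half_eq]
    ring
  norm_num [h32]
  rw [rpow_neg hω.le, eq_div_iff (by positivity : 4 * ω ^ ((3:ℝ)/2) ≠ 0)]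
  field_simp
  norm_num

lemma moment3 (ω : ℝ) (hω : 0 < ω) :
    ∫ x in Ioi (0:ℝ), x ^ 3 * exp (-ω * x ^ 2) = 1/(2*ω^2) := by
  rw [moment ω hω 3]
  have h2 : Real.Gamma 2 = 1 := by
    rw [show (2:ℝ) = 1 + 1 by norm_num, Real.Gamma_add_one one_ne_zero, Real.Gamma_one]; ring
  norm_num [h2]

lemma intOnPow (ω : ℝ) (hω : 0 < ω) (n : ℕ) :
    IntegrableOn (fun x : ℝ => x ^ n * exp (-ω * x ^ 2)) (Ioi 0) :=
  (integrableOn_rpow_mul_exp_neg_mul_sq hω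
      (by have : (0:ℝ) ≤ n := Nat.cast_nonneg n; linarith : (-1:ℝ) < n)).congr_fun
    (fun x _ => by simp only [rpow_natCast]) measurableSet_Ioi

lemma inner_poly (ω : ℝ) (hω : 0 < ω) (A B C : ℝ) :
    ∫ ρ in Ioi (0:ℝ), (A*ρ^3 + B*ρ^2 + C*ρ) * exp (-ω*ρ^2)
      = A/(2*ω^2) + B * (Real.sqrt π/(4*ω^((3:ℝ)/2))) + C/(2*ω) := by
  have h3 : Integrable (fun x : ℝ => A * (x ^ 3 * exp (-ω * x ^ 2)))
      (volume.restrict (Ioi 0)) := (intOnPow ω hω 3).const_mul A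
  have h2 : Integrable (fun x : ℝ => B * (x ^ 2 * exp (-ω * x ^ 2)))
      (volume.restrict (Ioi 0)) := (intOnPow ω hω 2).const_mul B
  have h1 : Integrable (fun x : ℝ => C * (x ^ 1 * exp (-ω * x ^ 2)))
      (volume.restrict (Ioi 0)) := (intOnPow ω hω 1).const_mul C
  have h23 : Integrable (fun x : ℝ => B * (x ^ 2 * exp (-ω * x ^ 2))
      + C * (x ^ 1 * exp (-ω * x ^ 2))) (volume.restrict (Ioi 0)) := h2.add h1
  have : ∀ ρ : ℝ, (A*ρ^3 + B*ρ^2 + C*ρ) * exp (-ω*ρ^2)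
      = A*(ρ^3 * exp (-ω*ρ^2)) + (B*(ρ^2 * exp (-ω*ρ^2)) + C*(ρ^1 * exp (-ω*ρ^2))) := by
    intro ρ; ring
  simp_rw [this]
  rw [integral_add h3 h23, integral_add h2 h1, integral_const_mul, integral_const_mul,
    integral_const_mul, moment1 ω hω, moment2 ω hω, moment3 ω hω]
  ring

lemma inner_val (ω γ a Λ : ℝ) (hω : 0 < ω) (g g' : ℝ → ℝ) (θ : ℝ) :
    (∫ ρ in Ioi (0 : ℝ),
      (‖(-(ω * ρ : ℂ) - Complex.I * (g θ : ℂ)) * u0 ω g ρ θ‖ ^ 2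
        + (1 / ρ ^ 2) *
            ‖Complex.I * ((stg a θ * (ρ ^ 2 / 2) * Real.cos γ - ρ * g' θ : ℝ) : ℂ) *
              u0 ω g ρ θ‖ ^ 2
        + stg a θ ^ 2 * ρ ^ 2 * Real.sin γ ^ 2 * Real.sin θ ^ 2 * ‖u0 ω g ρ θ‖ ^ 2
        - Λ * ‖u0 ω g ρ θ‖ ^ 2) * ρ)
    = (1/(2*ω)) * (g θ ^ 2 + g' θ ^ 2 - Λ)
      - (Real.sqrt π * Real.cos γ / (4 * ω ^ ((3:ℝ)/2))) * (stg a θ * g' θ)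
      + (1/(2*ω^2)) * (ω^2 + stg a θ^2 * Real.sin γ^2 * Real.sin θ^2
          + (1/4) * stg a θ^2 * Real.cos γ^2) := by
  set s := stg a θ
  set c := Real.cos γ
  set t := Real.sin θ
  set si := Real.sin γ
  set G := g θ
  set G' := g' θ
  have key : ∀ ρ ∈ Ioi (0:ℝ),
      (‖(-(ω * ρ : ℂ) - Complex.I * (G : ℂ)) * u0 ω g ρ θ‖ ^ 2
        + (1 / ρ ^ 2) * ‖Complex.I * ((s * (ρ ^ 2 / 2) * c - ρ * G' : ℝ) : ℂ) *
              u0 ω g ρ θ‖ ^ 2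
        + s ^ 2 * ρ ^ 2 * si ^ 2 * t ^ 2 * ‖u0 ω g ρ θ‖ ^ 2
        - Λ * ‖u0 ω g ρ θ‖ ^ 2) * ρ
      = ((ω^2 + s^2*si^2*t^2 + s^2*c^2/4)*ρ^3 + (-(s*c*G'))*ρ^2
          + (G^2 + G'^2 - Λ)*ρ) * exp (-ω*ρ^2) := by
    intro ρ hρ
    have hρ0 : ρ ≠ 0 := ne_of_gt (mem_Ioi.mp hρ)
    have e1 : (-(↑ω * ↑ρ : ℂ) - Complex.I * (G:ℂ)) = (-(((ω*ρ:ℝ)):ℂ) - Complex.I*((G:ℝ):ℂ)) := by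
      push_cast; ring
    rw [e1, norm_mul, norm_mul, mul_pow, mul_pow, norm2, norm_u0_sq, norm1]
    have : exp (-(ω*ρ^2)) = exp (-ω*ρ^2) := by ring_nf
    rw [this]
    field_simp
    ring
  rw [setIntegral_congr_fun measurableSet_Ioi key, inner_poly ω hω]
  ring

lemma stg_measurable (a : ℝ) : Measurable (stg a) := by
  unfold stg
  exact Measurable.ite measurableSet_Iio measurable_const measurable_const

lemma abs_stg_le (a θ : ℝ) : |stg a θ| ≤ max |a| 1 := by
  unfold stg
  split
  · exact le_max_left _ _
  · simp

/-- **Trial-energy integral identity (eq. (4.5)).** -/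
theorem trial_energy_identity (ω α γ a Λ : ℝ) (hω : 0 < ω) (hα : α ∈ Ioo 0 π)
    (hγ : γ ∈ Icc 0 (π / 2))
    (g g' : ℝ → ℝ) (S : Set ℝ) (hS : S.Finite)
    (hgc : ContinuousOn g (Ioo (-π + α) α))
    (hgd : ∀ θ ∈ Ioo (-π + α) α \ S, HasDerivAt g (g' θ) θ)
    (hg2 : IntegrableOn (fun θ => g θ ^ 2) (Ioo (-π + α) α))
    (hg'2 : IntegrableOn (fun θ => g' θ ^ 2) (Ioo (-π + α) α)) :
    (∫ θ in Ioo (-π + α) α, ∫ ρ in Ioi (0 : ℝ),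
      (‖(-(ω * ρ : ℂ) - Complex.I * (g θ : ℂ)) * u0 ω g ρ θ‖ ^ 2
        + (1 / ρ ^ 2) *
            ‖Complex.I * ((stg a θ * (ρ ^ 2 / 2) * Real.cos γ - ρ * g' θ : ℝ) : ℂ) *
              u0 ω g ρ θ‖ ^ 2
        + stg a θ ^ 2 * ρ ^ 2 * Real.sin γ ^ 2 * Real.sin θ ^ 2 * ‖u0 ω g ρ θ‖ ^ 2
        - Λ * ‖u0 ω g ρ θ‖ ^ 2) * ρ)
    = (1 / (2 * ω)) * (∫ θ in Ioo (-π + α) α, (g θ ^ 2 + g' θ ^ 2 - Λ))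
      - (Real.sqrt π * Real.cos γ / (4 * ω ^ ((3 : ℝ) / 2))) *
          (∫ θ in Ioo (-π + α) α, stg a θ * g' θ)
      + (1 / (2 * ω ^ 2)) *
          (∫ θ in Ioo (-π + α) α,
            (ω ^ 2 + stg a θ ^ 2 * Real.sin γ ^ 2 * Real.sin θ ^ 2
              + (1 / 4) * stg a θ ^ 2 * Real.cos γ ^ 2)) := by
  set T : Set ℝ := Ioo (-π + α) α with hT
  have hTm : MeasurableSet T := measurableSet_Ioo
  have hTfin : volume T < ⊤ := measure_Ioo_lt_top
  -- integrability of the three pieces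
  have hconst : ∀ C : ℝ, IntegrableOn (fun _ : ℝ => C) T := fun C =>
    integrableOn_const hTfin.ne
  have hF1 : IntegrableOn (fun θ => g θ ^ 2 + g' θ ^ 2 - Λ) T :=
    (hg2.add hg'2).sub (hconst Λ)
  -- a.e. strong measurability of g' on T
  have hSnull : volume.restrict T S = 0 :=
    le_antisymm (le_trans (Measure.restrict_le_self S) (hS.measure_zero volume).le) zero_le
  have hg'ae : g' =ᵐ[volume.restrict T] deriv g := by
    refine (ae_restrict_iff' hTm).mpr ?_
    have hSae : ∀ᵐ θ ∂(volume : Measure ℝ), θ ∉ S := by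
      rw [ae_iff]
      simpa using hS.measure_zero volume
    filter_upwards [hSae] with θ hθS hθT
    exact ((hgd θ ⟨hθT, hθS⟩).deriv).symm
  have hg'm : AEStronglyMeasurable g' (volume.restrict T) :=
    (stronglyMeasurable_deriv g).aestronglyMeasurable.congr hg'ae.symm
  have hg'int : IntegrableOn g' T := by
    refine Integrable.mono' (((hconst 1).add hg'2).const_mul (1/2)) hg'm ?_
    filter_upwards with θ
    simp only [Pi.add_apply]
    rw [Real.norm_eq_abs]
    nlinarith [sq_abs (g' θ), sq_nonneg (|g' θ| - 1)]
  have hF2 : IntegrableOn (fun θ => stg a θ * g' θ) T := by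
    refine Integrable.mono' (hg'int.abs.const_mul (max |a| 1))
      ((stg_measurable a).aestronglyMeasurable.mul hg'm) ?_
    filter_upwards with θ
    rw [Real.norm_eq_abs, abs_mul]
    exact mul_le_mul_of_nonneg_right (abs_stg_le a θ) (abs_nonneg _)
  have hF3 : IntegrableOn (fun θ => ω ^ 2 + stg a θ ^ 2 * Real.sin γ ^ 2 * Real.sin θ ^ 2
      + (1 / 4) * stg a θ ^ 2 * Real.cos γ ^ 2) T := by
    set M : ℝ := max |a| 1
    refine Integrable.mono' (hconst (ω^2 + M^2 + (1/4)*M^2))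
      ?_ ?_
    · refine (measurable_const.add ?_ |>.add ?_).aestronglyMeasurable
      · exact (((stg_measurable a).pow_const 2).mul_const _).mul (Real.measurable_sin.pow_const 2)
      · exact (measurable_const.mul ((stg_measurable a).pow_const 2)).mul_const _
    · filter_upwards with θ
      have hs : stg a θ ^ 2 ≤ M ^ 2 := by
        rw [← sq_abs (stg a θ)]
        have := abs_stg_le a θ
        nlinarith [abs_nonneg (stg a θ), le_max_right |a| 1, abs_nonneg a]
      have h1 : Real.sin γ ^ 2 ≤ 1 := Real.sin_sq_le_one γ
      have h2 : Real.sin θ ^ 2 ≤ 1 := Real.sin_sq_le_one θ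
      have h3 : Real.cos γ ^ 2 ≤ 1 := Real.cos_sq_le_one γ
      rw [Real.norm_eq_abs, abs_of_nonneg (by positivity)]
      have hM : (0:ℝ) ≤ M := le_trans (abs_nonneg a) (le_max_left _ _)
      nlinarith [sq_nonneg (stg a θ), sq_nonneg (Real.sin γ), sq_nonneg (Real.sin θ),
        sq_nonneg (Real.cos γ), mul_nonneg (sq_nonneg (stg a θ)) (sq_nonneg (Real.sin γ))]
  -- rewrite inner integral pointwise
  have : (∫ θ in T, ∫ ρ in Ioi (0 : ℝ),
      (‖(-(ω * ρ : ℂ) - Complex.I * (g θ : ℂ)) * u0 ω g ρ θ‖ ^ 2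
        + (1 / ρ ^ 2) *
            ‖Complex.I * ((stg a θ * (ρ ^ 2 / 2) * Real.cos γ - ρ * g' θ : ℝ) : ℂ) *
              u0 ω g ρ θ‖ ^ 2
        + stg a θ ^ 2 * ρ ^ 2 * Real.sin γ ^ 2 * Real.sin θ ^ 2 * ‖u0 ω g ρ θ‖ ^ 2
        - Λ * ‖u0 ω g ρ θ‖ ^ 2) * ρ)
    = ∫ θ in T, ((1/(2*ω)) * (g θ ^ 2 + g' θ ^ 2 - Λ)
        - (Real.sqrt π * Real.cos γ / (4 * ω ^ ((3:ℝ)/2))) * (stg a θ * g' θ)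
        + (1/(2*ω^2)) * (ω^2 + stg a θ^2 * Real.sin γ^2 * Real.sin θ^2
            + (1/4) * stg a θ^2 * Real.cos γ^2)) := by
    refine integral_congr_ae (Eventually.of_forall (fun θ => ?_))
    exact inner_val ω γ a Λ hω g g' θ
  have hI1 : Integrable (fun θ : ℝ => 1/(2*ω) * (g θ ^ 2 + g' θ ^ 2 - Λ))
      (volume.restrict T) := hF1.const_mul _
  have hI2 : Integrable (fun θ : ℝ =>
      Real.sqrt π * Real.cos γ / (4 * ω ^ ((3:ℝ)/2)) * (stg a θ * g' θ))
      (volume.restrict T) := hF2.const_mul _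
  have hI3 : Integrable (fun θ : ℝ => 1/(2*ω^2) * (ω^2 + stg a θ^2 * Real.sin γ^2
      * Real.sin θ^2 + (1/4) * stg a θ^2 * Real.cos γ^2)) (volume.restrict T) := hF3.const_mul _
  have hI12 : Integrable (fun θ : ℝ => 1/(2*ω) * (g θ ^ 2 + g' θ ^ 2 - Λ)
      - Real.sqrt π * Real.cos γ / (4 * ω ^ ((3:ℝ)/2)) * (stg a θ * g' θ))
      (volume.restrict T) := hI1.sub hI2
  rw [this, integral_add hI12 hI3, integral_sub hI1 hI2,
    integral_const_mul, integral_const_mul, integral_const_mul]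

end MagStep
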